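/- Let I = [a,b], let A : ℝ → M₂(ℍ) be continuous on I, and let M : ℝ → M₂(ℍ) be differentiable with M'(t) = A(t)M(t) for all t ∈ I. If ddet M(t₀) ≠ 0 for some t₀ ∈ I (equivalently M(t₀) is invertible), then ddet M(t) ≠ 0 for every t ∈ I (equivalently M(t) is invertible for every t ∈ I). -/

import Mathlib

open Matrix

/-- The double determinant of a 2×2 quaternion matrix. -/
noncomputable def ddet (M : Matrix (Fin 2) (Fin 2) (Quaternion ℝ)) : Quaternion ℝ :=
  (M * Mᴴ) 0 0 * (M * Mᴴ) 1 1 - (M * Mᴴ) 0 1 * (M * Mᴴ) 1 0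

section Aux

open Set

local notation "ℍ" => Quaternion ℝ

theorem N_entry (M : Matrix (Fin 2) (Fin 2) ℍ) (i j : Fin 2) :
    (M * Mᴴ) i j = M i 0 * star (M j 0) + M i 1 * star (M j 1) := by
  simp [Matrix.mul_apply, Matrix.conjTranspose_apply, Fin.sum_univ_two]

theorem N_diag (M : Matrix (Fin 2) (Fin 2) ℍ) (i : Fin 2) :
    (M * Mᴴ) i i = ((Quaternion.normSq (M i 0) + Quaternion.normSq (M i 1) : ℝ) : ℍ) := by
  rw [N_entry, Quaternion.self_mul_star, Quaternion.self_mul_star, Quaternion.coe_add]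

theorem N_herm (M : Matrix (Fin 2) (Fin 2) ℍ) :
    (M * Mᴴ) 1 0 = star ((M * Mᴴ) 0 1) :=
  ((isHermitian_mul_conjTranspose_self M).apply 1 0).symm

theorem eq_zero_of_isUnit_mulVec {N : Matrix (Fin 2) (Fin 2) ℍ} {w : Fin 2 → ℍ}
    (hN : IsUnit N) (h : N *ᵥ w = 0) : w = 0 := by
  obtain ⟨u, rfl⟩ := hN
  have h2 : u⁻¹.val *ᵥ (u.val *ᵥ w) = 0 := by rw [h, mulVec_zero]
  rwa [mulVec_mulVec, u.inv_mul, one_mulVec] at h2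

theorem vec2_eq_zero {v : Fin 2 → ℍ} (h0 : v 0 = 0) (h1 : v 1 = 0) : v = 0 :=
  funext fun i => by fin_cases i <;> assumption

theorem mulVec2_apply (N : Matrix (Fin 2) (Fin 2) ℍ) (x y : ℍ) (i : Fin 2) :
    (N *ᵥ ![x, y]) i = N i 0 * x + N i 1 * y := by
  simp [Matrix.mulVec, dotProduct, Fin.sum_univ_two]

theorem not_isUnit_of_ddet_eq_zero {M : Matrix (Fin 2) (Fin 2) ℍ}
    (hd : ddet M = 0) : ¬ IsUnit M := by
  intro hu
  have hNu : IsUnit (M * Mᴴ) := hu.mul ((Matrix.isUnit_conjTranspose M).mpr hu)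
  set N := M * Mᴴ with hNdef
  have hdd : N 0 0 * N 1 1 = N 0 1 * N 1 0 := sub_eq_zero.mp hd
  have hherm : N 1 0 = star (N 0 1) := by rw [hNdef]; exact N_herm M
  set r0 : ℝ := Quaternion.normSq (M 0 0) + Quaternion.normSq (M 0 1) with hr0def
  have hN00 : N 0 0 = (r0 : ℍ) := N_diag M 0
  by_cases hr0 : r0 = 0
  · -- first row of M is zero
    have h00 : Quaternion.normSq (M 0 0) = 0 := by
      have h1 := Quaternion.normSq_nonneg (a := M 0 0)
      have h2 := Quaternion.normSq_nonneg (a := M 0 1)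
      have h3 : Quaternion.normSq (M 0 0) + Quaternion.normSq (M 0 1) = 0 := by
        rw [← hr0def]; exact hr0
      linarith
    have h01 : Quaternion.normSq (M 0 1) = 0 := by
      have h1 := Quaternion.normSq_nonneg (a := M 0 0)
      have h3 : Quaternion.normSq (M 0 0) + Quaternion.normSq (M 0 1) = 0 := by
        rw [← hr0def]; exact hr0
      linarith [Quaternion.normSq_nonneg (a := M 0 1)]
    have hM00 : M 0 0 = 0 := Quaternion.normSq_eq_zero.mp h00
    have hM01 : M 0 1 = 0 := Quaternion.normSq_eq_zero.mp h01
    have hN01 : N 0 1 = 0 := by rw [hNdef, N_entry, hM00, hM01]; simp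
    have hN10 : N 1 0 = 0 := by rw [hherm, hN01, star_zero]
    have hN00' : N 0 0 = 0 := by rw [hN00, hr0]; simp
    have hker : N *ᵥ ![1, 0] = 0 := by
      refine vec2_eq_zero ?_ ?_ <;> rw [mulVec2_apply] <;>
        simp [hN00', hN01, hN10]
    have := congrFun (eq_zero_of_isUnit_mulVec hNu hker) 0
    simp at this
  · have hN00ne : N 0 0 ≠ 0 := by
      rw [hN00]
      exact fun hc => hr0 (Quaternion.coe_injective (by simpa using hc))
    have hinv : (N 0 0)⁻¹ = ((r0⁻¹ : ℝ) : ℍ) := by rw [hN00, Quaternion.coe_inv]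
    have hns : N 1 0 * N 0 1 = ((Quaternion.normSq (N 0 1) : ℝ) : ℍ) := by
      rw [hherm, Quaternion.star_mul_self]
    have hdd2 : ((Quaternion.normSq (N 0 1) : ℝ) : ℍ) = (r0 : ℍ) * N 1 1 := by
      rw [← hN00, hdd, hherm, Quaternion.self_mul_star]
    have hker : N *ᵥ ![-((N 0 0)⁻¹ * N 0 1), 1] = 0 := by
      refine vec2_eq_zero ?_ ?_ <;> rw [mulVec2_apply]
      · show N 0 0 * -((N 0 0)⁻¹ * N 0 1) + N 0 1 * 1 = (0 : Fin 2 → ℍ) 0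
        rw [mul_neg, mul_inv_cancel_left₀ hN00ne, mul_one, neg_add_cancel]
        rfl
      · show N 1 0 * -((N 0 0)⁻¹ * N 0 1) + N 1 1 * 1 = (0 : Fin 2 → ℍ) 1
        have : N 1 0 * -((N 0 0)⁻¹ * N 0 1) + N 1 1 * 1 = 0 := by
          calc N 1 0 * -((N 0 0)⁻¹ * N 0 1) + N 1 1 * 1
              = -(N 1 0 * (((r0⁻¹ : ℝ) : ℍ) * N 0 1)) + N 1 1 := by
                rw [hinv, mul_neg, mul_one]
            _ = -(((r0⁻¹ : ℝ) : ℍ) * (N 1 0 * N 0 1)) + N 1 1 := by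
                rw [← mul_assoc, ← Quaternion.coe_commutes, mul_assoc]
            _ = -(((r0⁻¹ : ℝ) : ℍ) * ((r0 : ℍ) * N 1 1)) + N 1 1 := by rw [hns, hdd2]
            _ = -(((r0⁻¹ * r0 : ℝ) : ℍ) * N 1 1) + N 1 1 := by
                rw [Quaternion.coe_mul, mul_assoc]
            _ = 0 := by rw [inv_mul_cancel₀ hr0]; simp
        rw [this]; rfl
    have := congrFun (eq_zero_of_isUnit_mulVec hNu hker) 1
    simp at this
theorem isUnit_of_trivial_kernel {M : Matrix (Fin 2) (Fin 2) ℍ}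
    (h : ∀ v : Fin 2 → ℍ, M *ᵥ v = 0 → v = 0) : IsUnit M := by
  have key : ∀ Z : Matrix (Fin 2) (Fin 2) ℍ, M * Z = 0 → Z = 0 := by
    intro Z hZ
    refine Matrix.ext fun i j => ?_
    have hv : M *ᵥ (fun k => Z k j) = 0 := by
      funext i'
      have := congrFun (congrFun hZ i') j
      simpa [Matrix.mulVec, dotProduct, Matrix.mul_apply] using this
    have := congrFun (h _ hv) i
    simpa using this
  have inj : Function.Injective (LinearMap.mulLeft ℝ M) := by
    intro X Y hXY
    simp only [LinearMap.mulLeft_apply] at hXY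
    have hz : M * (X - Y) = 0 := by rw [mul_sub, hXY, sub_self]
    exact sub_eq_zero.mp (key _ hz)
  obtain ⟨X, hX⟩ := (LinearMap.injective_iff_surjective.mp inj) 1
  simp only [LinearMap.mulLeft_apply] at hX
  have injX : Function.Injective (LinearMap.mulLeft ℝ X) := by
    intro U V hUV
    simp only [LinearMap.mulLeft_apply] at hUV
    have : M * (X * U) = M * (X * V) := by rw [hUV]
    rwa [← mul_assoc, ← mul_assoc, hX, one_mul, one_mul] at this
  obtain ⟨Y, hY⟩ := (LinearMap.injective_iff_surjective.mp injX) 1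
  simp only [LinearMap.mulLeft_apply] at hY
  have hYM : Y = M := by
    calc Y = 1 * Y := (one_mul Y).symm
      _ = (M * X) * Y := by rw [hX]
      _ = M * (X * Y) := mul_assoc _ _ _
      _ = M := by rw [hY, mul_one]
  exact ⟨⟨M, X, hX, hYM ▸ hY⟩, rfl⟩

theorem exists_kernel_of_not_isUnit {M : Matrix (Fin 2) (Fin 2) ℍ}
    (h : ¬ IsUnit M) : ∃ v : Fin 2 → ℍ, v ≠ 0 ∧ M *ᵥ v = 0 := by
  by_contra hc
  push_neg at hc
  exact h (isUnit_of_trivial_kernel fun v hv => by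
    by_contra hv0
    exact (hc v hv0) hv)

theorem ddet_eq_zero_of_mulVec_eq_zero {M : Matrix (Fin 2) (Fin 2) ℍ} {v : Fin 2 → ℍ}
    (hv : v ≠ 0) (h : M *ᵥ v = 0) : ddet M = 0 := by
  have hMu : ¬ IsUnit M := fun hu => hv (eq_zero_of_isUnit_mulVec hu h)
  have hMHu : ¬ IsUnit Mᴴ := fun hu => hMu ((Matrix.isUnit_conjTranspose M).mp hu)
  obtain ⟨w, hw, hker⟩ := exists_kernel_of_not_isUnit hMHu
  have hNker : (M * Mᴴ) *ᵥ w = 0 := by rw [← mulVec_mulVec, hker, mulVec_zero]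
  set N := M * Mᴴ with hNdef
  have h1 : N 0 0 * w 0 + N 0 1 * w 1 = 0 := by
    have := congrFun hNker 0
    simpa [Matrix.mulVec, dotProduct, Fin.sum_univ_two] using this
  have h2 : N 1 0 * w 0 + N 1 1 * w 1 = 0 := by
    have := congrFun hNker 1
    simpa [Matrix.mulVec, dotProduct, Fin.sum_univ_two] using this
  set r1 : ℝ := Quaternion.normSq (M 1 0) + Quaternion.normSq (M 1 1) with hr1def
  have hN11 : N 1 1 = (r1 : ℍ) := N_diag M 1
  have hgoal : ddet M = N 0 0 * N 1 1 - N 0 1 * N 1 0 := rfl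
  by_cases hw0 : w 0 = 0
  · have hw1 : w 1 ≠ 0 := fun hw1 => hw (vec2_eq_zero hw0 hw1)
    rw [hw0, mul_zero, zero_add] at h1 h2
    have hN01 : N 0 1 = 0 := by
      rcases mul_eq_zero.mp h1 with h' | h'
      · exact h'
      · exact absurd h' hw1
    have hN11' : N 1 1 = 0 := by
      rcases mul_eq_zero.mp h2 with h' | h'
      · exact h'
      · exact absurd h' hw1
    rw [hgoal, hN01, hN11', mul_zero, zero_mul, sub_zero]
  · have ha : N 0 0 * w 0 = -(N 0 1 * w 1) := eq_neg_of_add_eq_zero_left h1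
    have hb : N 1 0 * w 0 = -(N 1 1 * w 1) := eq_neg_of_add_eq_zero_left h2
    have key : (N 0 0 * N 1 1 - N 0 1 * N 1 0) * w 0 = 0 := by
      calc (N 0 0 * N 1 1 - N 0 1 * N 1 0) * w 0
          = N 0 0 * N 1 1 * w 0 - N 0 1 * N 1 0 * w 0 := by rw [sub_mul]
        _ = (r1 : ℝ) * N 0 0 * w 0 - N 0 1 * (N 1 0 * w 0) := by
            rw [hN11, ← Quaternion.coe_commutes, mul_assoc (N 0 1)]
        _ = (r1 : ℝ) * (N 0 0 * w 0) - N 0 1 * -(((r1 : ℝ) : ℍ) * w 1) := by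
            rw [mul_assoc, hb, hN11]
        _ = -(((r1 : ℝ) : ℍ) * (N 0 1 * w 1)) + N 0 1 * (((r1 : ℝ) : ℍ) * w 1) := by
            rw [ha, mul_neg, mul_neg, sub_neg_eq_add]
        _ = -(((r1 : ℝ) : ℍ) * (N 0 1 * w 1)) + ((r1 : ℝ) : ℍ) * (N 0 1 * w 1) := by
            rw [← mul_assoc (N 0 1), ← Quaternion.coe_commutes, mul_assoc]
        _ = 0 := neg_add_cancel _
    rw [hgoal]
    rcases mul_eq_zero.mp key with h' | h'
    · exact h'
    · exact absurd h' hw0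

theorem mulVec_norm_le (N : Matrix (Fin 2) (Fin 2) ℍ) (z : Fin 2 → ℍ) :
    ‖N *ᵥ z‖ ≤ (∑ i, ∑ j, ‖N i j‖) * ‖z‖ := by
  have hC : (0:ℝ) ≤ (∑ i, ∑ j, ‖N i j‖) :=
    Finset.sum_nonneg fun i _ => Finset.sum_nonneg fun j _ => norm_nonneg _
  refine (pi_norm_le_iff_of_nonneg (mul_nonneg hC (norm_nonneg _))).mpr fun i => ?_
  have e : (N *ᵥ z) i = ∑ j, N i j * z j := rfl
  have h1 : ‖(N *ᵥ z) i‖ ≤ ∑ j, ‖N i j‖ * ‖z‖ := by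
    rw [e]
    refine (norm_sum_le _ _).trans (Finset.sum_le_sum fun j _ => ?_)
    exact (norm_mul_le _ _).trans
      (mul_le_mul_of_nonneg_left (norm_le_pi_norm z j) (norm_nonneg _))
  refine h1.trans ?_
  rw [← Finset.sum_mul]
  refine mul_le_mul_of_nonneg_right ?_ (norm_nonneg _)
  exact Finset.single_le_sum (f := fun i => ∑ j, ‖N i j‖)
    (fun i _ => Finset.sum_nonneg fun j _ => norm_nonneg _) (Finset.mem_univ i)

theorem mulVec_lipschitz (N : Matrix (Fin 2) (Fin 2) ℍ) {C : ℝ}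
    (hC : (∑ i, ∑ j, ‖N i j‖) ≤ C) :
    LipschitzWith C.toNNReal (fun z : Fin 2 → ℍ => N *ᵥ z) := by
  refine LipschitzWith.of_dist_le_mul fun x y => ?_
  rw [dist_eq_norm, ← mulVec_sub]
  have h0 : (0:ℝ) ≤ (∑ i, ∑ j, ‖N i j‖) :=
    Finset.sum_nonneg fun i _ => Finset.sum_nonneg fun j _ => norm_nonneg _
  refine (mulVec_norm_le N (x - y)).trans ?_
  rw [dist_eq_norm]
  refine mul_le_mul_of_nonneg_right ?_ (norm_nonneg _)
  rw [Real.coe_toNNReal']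
  exact hC.trans (le_max_left _ _)

theorem kernel_propagate (a b : ℝ)
    (A : ℝ → Matrix (Fin 2) (Fin 2) (Quaternion ℝ))
    (hA : ContinuousOn A (Set.Icc a b))
    (M : ℝ → Matrix (Fin 2) (Fin 2) (Quaternion ℝ))
    (hM : ∀ t ∈ Set.Icc a b, ∀ i j, HasDerivAt (fun s => M s i j) ((A t * M t) i j) t)
    (t₁ t₂ : ℝ) (h₁ : t₁ ∈ Set.Icc a b) (h₂ : t₂ ∈ Set.Icc a b)
    (v : Fin 2 → ℍ) (hker : M t₁ *ᵥ v = 0) : M t₂ *ᵥ v = 0 := by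
  have hab : a ≤ b := h₁.1.trans h₁.2
  set φ : ℝ → ℝ := fun s => max a (min s b) with hφdef
  have hφ : ∀ s, φ s ∈ Set.Icc a b := fun s =>
    ⟨le_max_left _ _, max_le hab (min_le_right _ _)⟩
  have hφeq : ∀ s ∈ Set.Icc a b, φ s = s := fun s hs => by
    rw [hφdef]; simp only; rw [min_eq_left hs.2, max_eq_right hs.1]
  -- continuous bound on entries of A
  have hcont : ContinuousOn (fun u => ∑ i, ∑ j, ‖A u i j‖) (Set.Icc a b) := by
    refine continuousOn_finset_sum _ fun i _ => continuousOn_finset_sum _ fun j _ => ?_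
    exact (((continuous_apply j).comp (continuous_apply i)).comp_continuousOn hA).norm
  obtain ⟨u₀, hu₀, hmax'⟩ := (isCompact_Icc (a := a) (b := b)).exists_isMaxOn ⟨t₁, h₁⟩ hcont
  have hmax : ∀ s ∈ Set.Icc a b, (∑ i, ∑ j, ‖A s i j‖) ≤ ∑ i, ∑ j, ‖A u₀ i j‖ :=
    fun s hs => hmax' hs
  set C : ℝ := ∑ i, ∑ j, ‖A u₀ i j‖ with hCdef
  set V : ℝ → (Fin 2 → ℍ) → (Fin 2 → ℍ) := fun s x => A (φ s) *ᵥ x with hVdef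
  have hlip : ∀ s, LipschitzOnWith C.toNNReal (V s) Set.univ := fun s =>
    (mulVec_lipschitz (A (φ s)) (hmax _ (hφ s))).lipschitzOnWith
  set f : ℝ → (Fin 2 → ℍ) := fun s => M s *ᵥ v with hfdef
  have hderiv : ∀ s ∈ Set.Icc a b, HasDerivAt f (V s (f s)) s := by
    intro s hs
    have htarget : V s (f s) = fun i => ∑ j, (A s * M s) i j * v j := by
      rw [hVdef]
      simp only
      rw [hφeq s hs, hfdef]
      simp only
      rw [mulVec_mulVec]
      rfl
    rw [htarget]
    refine hasDerivAt_pi.mpr fun i => ?_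
    have hcomp : (fun s => f s i) = fun s => ∑ j, M s i j * v j := rfl
    rw [hfdef]
    simp only [Matrix.mulVec, dotProduct]
    exact HasDerivAt.fun_sum fun j _ => (hM s hs i j).mul_const (v j)
  have hfc : ContinuousOn f (Set.Icc a b) := fun s hs =>
    (hderiv s hs).continuousAt.continuousWithinAt
  have hg : ∀ (s : Set ℝ), ContinuousOn (fun _ : ℝ => (0 : Fin 2 → ℍ)) s :=
    fun _ => continuousOn_const
  have hV0 : ∀ s, V s 0 = 0 := fun s => mulVec_zero _
  rcases le_total t₁ t₂ with hle | hle
  · have hsub : Set.Icc t₁ t₂ ⊆ Set.Icc a b := Set.Icc_subset_Icc h₁.1 h₂.2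
    have heq := ODE_solution_unique_of_mem_Icc_right (v := V) (s := fun _ => Set.univ)
      (K := C.toNNReal) (f := f) (g := fun _ => 0) (a := t₁) (b := t₂)
      (fun s _ => hlip s)
      (hfc.mono hsub)
      (fun s hs => (hderiv s (hsub (Set.Ico_subset_Icc_self hs))).hasDerivWithinAt)
      (fun _ _ => Set.mem_univ _)
      (hg _)
      (fun s hs => by
        rw [hV0]
        exact (hasDerivAt_const s (0 : Fin 2 → ℍ)).hasDerivWithinAt)
      (fun _ _ => Set.mem_univ _)
      hker
    exact heq (Set.right_mem_Icc.mpr hle)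
  · have hsub : Set.Icc t₂ t₁ ⊆ Set.Icc a b := Set.Icc_subset_Icc h₂.1 h₁.2
    have heq := ODE_solution_unique_of_mem_Icc_left (v := V) (s := fun _ => Set.univ)
      (K := C.toNNReal) (f := f) (g := fun _ => 0) (a := t₂) (b := t₁)
      (fun s _ => hlip s)
      (hfc.mono hsub)
      (fun s hs => (hderiv s (hsub (Set.Ioc_subset_Icc_self hs))).hasDerivWithinAt)
      (fun _ _ => Set.mem_univ _)
      (hg _)
      (fun s hs => by
        rw [hV0]
        exact (hasDerivAt_const s (0 : Fin 2 → ℍ)).hasDerivWithinAt)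
      (fun _ _ => Set.mem_univ _)
      hker
    exact heq (Set.left_mem_Icc.mpr hle)

end Aux

/-- If a solution matrix of `x' = A(t) x` on `I = [a,b]` has nonzero double determinant
(equivalently, is invertible) at some `t₀ ∈ I`, then it has nonzero double determinant
(equivalently, is invertible) at every `t ∈ I`. -/
theorem solutionMatrix_ddet_ne_zero (a b : ℝ)
    (A : ℝ → Matrix (Fin 2) (Fin 2) (Quaternion ℝ))
    (hA : ContinuousOn A (Set.Icc a b))
    (M : ℝ → Matrix (Fin 2) (Fin 2) (Quaternion ℝ))
    (hM : ∀ t ∈ Set.Icc a b, ∀ i j, HasDerivAt (fun s => M s i j) ((A t * M t) i j) t)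
    (t₀ : ℝ) (ht₀ : t₀ ∈ Set.Icc a b) (h₀ : ddet (M t₀) ≠ 0) :
    ∀ t ∈ Set.Icc a b, ddet (M t) ≠ 0 ∧ IsUnit (M t) := by
  have key : ∀ t ∈ Set.Icc a b, ¬ IsUnit (M t) → False := by
    intro t ht hnu
    obtain ⟨v, hv, hker⟩ := exists_kernel_of_not_isUnit hnu
    have h2 := kernel_propagate a b A hA M hM t t₀ ht ht₀ v hker
    exact h₀ (ddet_eq_zero_of_mulVec_eq_zero hv h2)
  intro t ht
  have hu : IsUnit (M t) := not_not.mp fun h => key t ht h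
  exact ⟨fun h0 => absurd hu (not_isUnit_of_ddet_eq_zero h0), hu⟩
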